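/- For s > 0 and z = (μ,ν) ∈ ℝ^r × ℝ^s, the characteristic polynomial of Ω(z) satisfies det(Ω(z) + λ)² = [((λ² + ‖μ‖² + ‖ν‖²)² - 4‖μ‖²‖ν‖²)]^N = [(λ² + (‖μ‖+‖ν‖)²)(λ² + (‖μ‖-‖ν‖)²)]^N. -/
import Mathlib


open scoped BigOperators Matrix

set_option maxHeartbeats 1000000

/-- For `s > 0` and `z = (μ,ν)`, the characteristic polynomial of the structure-constant
matrix `Ω(z) = [[-A(μ), B(ν)],[-B(ν)ᵀ, D(μ)]]` satisfies
`det(Ω(z) + λ)² = ((λ² + ‖μ‖² + ‖ν‖²)² - 4‖μ‖²‖ν‖²)^N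
             = ((λ² + (‖μ‖+‖ν‖)²)(λ² + (‖μ‖-‖ν‖)²))^N`. -/
theorem statement7 {r s N : ℕ} (hs : 0 < s) (μ : Fin r → ℝ) (ν : Fin s → ℝ)
    (A B D : Matrix (Fin N) (Fin N) ℝ)
    (hA : Aᵀ = -A) (hD : Dᵀ = -D)
    (hA2 : A * A = (-(∑ i, μ i ^ 2)) • (1 : Matrix (Fin N) (Fin N) ℝ))
    (hD2 : D * D = (-(∑ i, μ i ^ 2)) • (1 : Matrix (Fin N) (Fin N) ℝ))
    (hB1 : B * Bᵀ = (∑ j, ν j ^ 2) • (1 : Matrix (Fin N) (Fin N) ℝ))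
    (hB2 : Bᵀ * B = (∑ j, ν j ^ 2) • (1 : Matrix (Fin N) (Fin N) ℝ))
    (hBAB : Bᵀ * A * B + (∑ j, ν j ^ 2) • D = 0)
    (hAB : A * B + B * D = 0) :
    ∀ lam : ℝ,
      (Matrix.fromBlocks (-A) B (-Bᵀ) D
          + lam • (1 : Matrix (Fin N ⊕ Fin N) (Fin N ⊕ Fin N) ℝ)).det ^ 2
        = (((lam ^ 2 + (∑ i, μ i ^ 2) + (∑ j, ν j ^ 2)) ^ 2
            - 4 * (∑ i, μ i ^ 2) * (∑ j, ν j ^ 2))) ^ N ∧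
      (Matrix.fromBlocks (-A) B (-Bᵀ) D
          + lam • (1 : Matrix (Fin N ⊕ Fin N) (Fin N ⊕ Fin N) ℝ)).det ^ 2
        = ((lam ^ 2 + (Real.sqrt (∑ i, μ i ^ 2) + Real.sqrt (∑ j, ν j ^ 2)) ^ 2)
            * (lam ^ 2 + (Real.sqrt (∑ i, μ i ^ 2) - Real.sqrt (∑ j, ν j ^ 2)) ^ 2)) ^ N := by
  intro lam
  set m : ℝ := ∑ i, μ i ^ 2 with hm_def
  set n : ℝ := ∑ j, ν j ^ 2 with hn_def
  have hm : 0 ≤ m := Finset.sum_nonneg fun i _ => sq_nonneg _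
  have hn : 0 ≤ n := Finset.sum_nonneg fun j _ => sq_nonneg _
  set Ω : Matrix (Fin N ⊕ Fin N) (Fin N ⊕ Fin N) ℝ := Matrix.fromBlocks (-A) B (-Bᵀ) D with hΩ
  set M : Matrix (Fin N ⊕ Fin N) (Fin N ⊕ Fin N) ℝ := Ω + lam • 1 with hM
  have hΩt : Ωᵀ = -Ω := by
    rw [hΩ, Matrix.fromBlocks_transpose, Matrix.transpose_neg, Matrix.transpose_neg,
      Matrix.transpose_transpose, hA, hD]
    simp [Matrix.fromBlocks_neg]
  have hMt : Mᵀ = lam • 1 - Ω := by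
    rw [hM, Matrix.transpose_add, hΩt, Matrix.transpose_smul, Matrix.transpose_one]
    abel
  -- step 1 : det M ^ 2 = det (lam^2 • 1 - Ω * Ω)
  have step1 : M.det ^ 2 = ((lam ^ 2) • (1 : Matrix (Fin N ⊕ Fin N) (Fin N ⊕ Fin N) ℝ) - Ω * Ω).det := by
    have hmm : M * Mᵀ = (lam ^ 2) • (1 : Matrix (Fin N ⊕ Fin N) (Fin N ⊕ Fin N) ℝ) - Ω * Ω := by
      rw [hMt, hM]
      simp only [mul_sub, add_mul, Matrix.smul_mul, Matrix.mul_smul, smul_smul, one_mul,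
        mul_one, sq]
      abel
    rw [sq]
    nth_rewrite 2 [← Matrix.det_transpose M]
    rw [← Matrix.det_mul, hmm]
  have hBD : A * B = -(B * D) := by
    linear_combination (norm := noncomm_ring) hAB
  have hDBt : D * Bᵀ = -(Bᵀ * A) := by
    have h := congrArg Matrix.transpose hAB
    rw [Matrix.transpose_add, Matrix.transpose_mul, Matrix.transpose_mul, hA, hD,
      Matrix.transpose_zero] at h
    linear_combination (norm := noncomm_ring) -h
  have hBAB' : Bᵀ * A * B = -(n • D) := by
    linear_combination (norm := noncomm_ring) hBAB
  -- step 2 : the square of Ω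
  have eTL : -A * -A + B * -Bᵀ = (-(m + n)) • (1 : Matrix (Fin N) (Fin N) ℝ) := by
    simp only [Matrix.neg_mul, Matrix.mul_neg, neg_neg, hA2, hB1]
    module
  have eTR : -A * B + B * D = (2 : ℝ) • (B * D) := by
    rw [Matrix.neg_mul, hBD, neg_neg]; module
  have eBL : -Bᵀ * -A + D * -Bᵀ = (2 : ℝ) • (Bᵀ * A) := by
    simp only [Matrix.neg_mul, Matrix.mul_neg, neg_neg, hDBt]; module
  have eBR : -Bᵀ * B + D * D = (-(m + n)) • (1 : Matrix (Fin N) (Fin N) ℝ) := by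
    simp only [Matrix.neg_mul, hB2, hD2]
    module
  have step2 : Ω * Ω = Matrix.fromBlocks ((-(m + n)) • 1) ((2:ℝ) • (B * D))
      ((2:ℝ) • (Bᵀ * A)) ((-(m + n)) • 1) := by
    rw [hΩ, Matrix.fromBlocks_multiply, eTL, eTR, eBL, eBR]
  set c : ℝ := lam ^ 2 + m + n with hc_def
  set Q : Matrix (Fin N) (Fin N) ℝ := -((2:ℝ) • (B * D)) with hQ
  set R : Matrix (Fin N) (Fin N) ℝ := -((2:ℝ) • (Bᵀ * A)) with hR
  have step3 : (lam ^ 2) • (1 : Matrix (Fin N ⊕ Fin N) (Fin N ⊕ Fin N) ℝ) - Ω * Ω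
      = Matrix.fromBlocks (c • 1) Q R (c • 1) := by
    rw [step2, ← Matrix.fromBlocks_one, Matrix.fromBlocks_smul, sub_eq_add_neg,
      Matrix.fromBlocks_neg, Matrix.fromBlocks_add]
    refine Matrix.fromBlocks_inj.mpr ⟨?_, ?_, ?_, ?_⟩
    · rw [hc_def]; module
    · rw [hQ]; module
    · rw [hR]; module
    · rw [hc_def]; module
  -- products of Q and R
  have hBDBA : B * D * (Bᵀ * A) = (n * m) • (1 : Matrix (Fin N) (Fin N) ℝ) := by
    have e0 : B * D = -(A * B) := by rw [hBD, neg_neg]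
    rw [e0, Matrix.neg_mul, ← Matrix.mul_assoc, Matrix.mul_assoc A B Bᵀ, hB1,
      Matrix.mul_smul, Matrix.mul_one, Matrix.smul_mul, hA2]
    rw [smul_smul]
    module
  have hBABD : Bᵀ * A * (B * D) = (n * m) • (1 : Matrix (Fin N) (Fin N) ℝ) := by
    rw [← Matrix.mul_assoc, hBAB', Matrix.neg_mul, Matrix.smul_mul, hD2, smul_smul]
    module
  have hQR : Q * R = (4 * (n * m)) • (1 : Matrix (Fin N) (Fin N) ℝ) := by
    rw [hQ, hR, Matrix.neg_mul, Matrix.mul_neg, neg_neg, Matrix.smul_mul, Matrix.mul_smul,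
      smul_smul, hBDBA, smul_smul]
    module
  have hRQ : R * Q = (4 * (n * m)) • (1 : Matrix (Fin N) (Fin N) ℝ) := by
    rw [hR, hQ, Matrix.neg_mul, Matrix.mul_neg, neg_neg, Matrix.smul_mul, Matrix.mul_smul,
      smul_smul, hBABD, smul_smul]
    module
  set M' : Matrix (Fin N ⊕ Fin N) (Fin N ⊕ Fin N) ℝ := Matrix.fromBlocks (c • 1) Q R (c • 1) with hM'
  set M'' : Matrix (Fin N ⊕ Fin N) (Fin N ⊕ Fin N) ℝ := Matrix.fromBlocks (c • 1) (-Q) (-R) (c • 1) with hM''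
  set J : Matrix (Fin N ⊕ Fin N) (Fin N ⊕ Fin N) ℝ := Matrix.fromBlocks 1 0 0 (-1) with hJ
  have hdet_eq : M''.det = M'.det := by
    have hconj : M'' = J * M' * J := by
      rw [hJ, hM', hM'', Matrix.fromBlocks_multiply, Matrix.fromBlocks_multiply]
      refine Matrix.fromBlocks_inj.mpr ⟨?_, ?_, ?_, ?_⟩ <;> simp [Matrix.neg_mul, Matrix.mul_neg]
    have hJJ : J.det * J.det = 1 := by
      rw [← Matrix.det_mul, hJ, Matrix.fromBlocks_multiply]
      simp
    rw [hconj, Matrix.det_mul, Matrix.det_mul]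
    linear_combination M'.det * hJJ
  have hprod : M' * M'' = (c ^ 2 - 4 * (n * m)) • (1 : Matrix (Fin N ⊕ Fin N) (Fin N ⊕ Fin N) ℝ) := by
    have h11 : (c • (1 : Matrix (Fin N) (Fin N) ℝ)) * (c • 1) = (c ^ 2) • 1 := by
      rw [Matrix.smul_mul, Matrix.mul_smul, Matrix.one_mul, smul_smul, sq]
    rw [hM', hM'', Matrix.fromBlocks_multiply, ← Matrix.fromBlocks_one, Matrix.fromBlocks_smul]
    refine Matrix.fromBlocks_inj.mpr ⟨?_, ?_, ?_, ?_⟩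
    · rw [Matrix.mul_neg, hQR, h11]
      module
    · rw [Matrix.smul_mul, Matrix.one_mul, Matrix.mul_smul, smul_neg]
      simp
    · rw [Matrix.mul_smul, Matrix.smul_mul, Matrix.one_mul, smul_neg]
      simp
    · rw [Matrix.mul_neg, hRQ, h11]
      module
  have hdet_sq : M'.det ^ 2 = ((c ^ 2 - 4 * (n * m)) ^ N) ^ 2 := by
    rw [sq]
    nth_rewrite 2 [← hdet_eq]
    rw [← Matrix.det_mul, hprod, Matrix.det_smul, Matrix.det_one, mul_one]
    rw [show Fintype.card (Fin N ⊕ Fin N) = N + N by simp, pow_add, ← sq]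
  have hbase_nonneg : 0 ≤ c ^ 2 - 4 * (n * m) := by
    rw [hc_def]; nlinarith [sq_nonneg lam, sq_nonneg (m - n), sq_nonneg (lam ^ 2)]
  have hdet_nonneg : 0 ≤ M'.det := by
    rw [← step3, ← step1]; positivity
  have h1 : 0 ≤ (c ^ 2 - 4 * (n * m)) ^ N := pow_nonneg hbase_nonneg N
  have hdetM' : M'.det = (c ^ 2 - 4 * (n * m)) ^ N := by
    refine le_antisymm ?_ ?_ <;> nlinarith [hdet_sq, hdet_nonneg, h1]
  have main : M.det ^ 2 = ((lam ^ 2 + m + n) ^ 2 - 4 * m * n) ^ N := by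
    rw [step1, step3, hdetM']
    congr 1; rw [hc_def]; ring
  refine ⟨main, ?_⟩
  rw [main]
  congr 1
  have ha : Real.sqrt m ^ 2 = m := Real.sq_sqrt hm
  have hb : Real.sqrt n ^ 2 = n := Real.sq_sqrt hn
  have key : ∀ a b : ℝ, a ^ 2 = m → b ^ 2 = n →
      (lam ^ 2 + m + n) ^ 2 - 4 * m * n
        = (lam ^ 2 + (a + b) ^ 2) * (lam ^ 2 + (a - b) ^ 2) := by
    intro a b ha' hb'; rw [← ha', ← hb']; ring
  exact key _ _ ha hb
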